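/- arXiv:2511.02437 — 2 statements merged into one kernel-verified Lean document; each statement's English description precedes it below -/
import Mathlib

section
/- Let y1, y2, y3 : [0,∞) → ℝ be nonnegative differentiable functions satisfying dy1/dt = -α1 y1 y2, dy2/dt = -α2 y2 y3, dy3/dt = -α3 y3 y1, with αi > 0 and yi(0) > 0. Set S(t) = y1(t)+y2(t)+y3(t) and assume S(0) > 0 and S(t) > 0 for all t. Then S(t) ≥ 1/((α_max/3) t + 1/S(0)) for all t ≥ 0, where α_max = max(α1,α2,α3). Consequently, max(y1(t), y2(t), y3(t)) ≥ 1/(α_max t + 3/S(0)) for all t ≥ 0. -/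
theorem three_cycle_lower_bound (α1 α2 α3 : ℝ) (hα1 : 0 < α1) (hα2 : 0 < α2) (hα3 : 0 < α3)
    (y1 y2 y3 : ℝ → ℝ)
    (hpos1 : ∀ t : ℝ, 0 ≤ t → 0 ≤ y1 t)
    (hpos2 : ∀ t : ℝ, 0 ≤ t → 0 ≤ y2 t)
    (hpos3 : ∀ t : ℝ, 0 ≤ t → 0 ≤ y3 t)
    (h1 : ∀ t : ℝ, 0 ≤ t → HasDerivAt y1 (-α1 * y1 t * y2 t) t)
    (h2 : ∀ t : ℝ, 0 ≤ t → HasDerivAt y2 (-α2 * y2 t * y3 t) t)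
    (h3 : ∀ t : ℝ, 0 ≤ t → HasDerivAt y3 (-α3 * y3 t * y1 t) t)
    (h10 : 0 < y1 0) (h20 : 0 < y2 0) (h30 : 0 < y3 0)
    (hS : ∀ t : ℝ, 0 ≤ t → 0 < y1 t + y2 t + y3 t) :
    (∀ t : ℝ, 0 ≤ t →
      1 / ((max (max α1 α2) α3 / 3) * t + 1 / (y1 0 + y2 0 + y3 0)) ≤
        y1 t + y2 t + y3 t) ∧
    (∀ t : ℝ, 0 ≤ t →
      1 / (max (max α1 α2) α3 * t + 3 / (y1 0 + y2 0 + y3 0)) ≤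
        max (max (y1 t) (y2 t)) (y3 t)) := by
  set α : ℝ := max (max α1 α2) α3 with hαdef
  have hα : 0 < α := lt_of_lt_of_le hα3 (le_max_right _ _)
  have hα1' : α1 ≤ α := le_trans (le_max_left _ _) (le_max_left _ _)
  have hα2' : α2 ≤ α := le_trans (le_max_right _ _) (le_max_left _ _)
  have hα3' : α3 ≤ α := le_max_right _ _
  set S : ℝ → ℝ := fun t => y1 t + y2 t + y3 t with hSdef
  have hSpos : ∀ t : ℝ, 0 ≤ t → 0 < S t := hS
  have hSd : ∀ t : ℝ, 0 ≤ t →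
      HasDerivAt S (-α1 * y1 t * y2 t + -α2 * y2 t * y3 t + -α3 * y3 t * y1 t) t := by
    intro t ht
    exact ((h1 t ht).add (h2 t ht)).add (h3 t ht)
  set g : ℝ → ℝ := fun t => α / 3 * t + (S 0)⁻¹ - (S t)⁻¹ with hgdef
  have hgd : ∀ t : ℝ, 0 ≤ t →
      HasDerivAt g (α / 3 - (-(-α1 * y1 t * y2 t + -α2 * y2 t * y3 t + -α3 * y3 t * y1 t)
        / (S t) ^ 2)) t := by
    intro t ht
    have hne : S t ≠ 0 := (hSpos t ht).ne'
    have hinv : HasDerivAt (fun x => (S x)⁻¹)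
        (-(-α1 * y1 t * y2 t + -α2 * y2 t * y3 t + -α3 * y3 t * y1 t) / (S t) ^ 2) t :=
      (hSd t ht).inv hne
    have hlin : HasDerivAt (fun x => α / 3 * x + (S 0)⁻¹) (α / 3) t := by
      simpa using ((hasDerivAt_id t).const_mul (α / 3)).add_const ((S 0)⁻¹)
    exact hlin.sub hinv
  have hgderiv_nonneg : ∀ t : ℝ, 0 ≤ t →
      0 ≤ α / 3 - (-(-α1 * y1 t * y2 t + -α2 * y2 t * y3 t + -α3 * y3 t * y1 t) / (S t) ^ 2) := by
    intro t ht
    have hSp := hSpos t ht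
    have hy1 := hpos1 t ht
    have hy2 := hpos2 t ht
    have hy3 := hpos3 t ht
    have hkey : α1 * y1 t * y2 t + α2 * y2 t * y3 t + α3 * y3 t * y1 t
        ≤ α / 3 * (S t) ^ 2 := by
      have h12 : (α - α1) * (y1 t * y2 t) ≥ 0 :=
        mul_nonneg (by linarith) (mul_nonneg hy1 hy2)
      have h23 : (α - α2) * (y2 t * y3 t) ≥ 0 :=
        mul_nonneg (by linarith) (mul_nonneg hy2 hy3)
      have h31 : (α - α3) * (y3 t * y1 t) ≥ 0 :=
        mul_nonneg (by linarith) (mul_nonneg hy3 hy1)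
      have hsq : y1 t * y2 t + y2 t * y3 t + y3 t * y1 t ≤ (S t) ^ 2 / 3 := by
        simp only [hSdef]
        nlinarith [sq_nonneg (y1 t - y2 t), sq_nonneg (y2 t - y3 t), sq_nonneg (y3 t - y1 t)]
      nlinarith
    rw [sub_nonneg, div_le_iff₀ (by positivity : (0:ℝ) < (S t) ^ 2)]
    nlinarith
  have hmono : MonotoneOn g (Set.Ici (0:ℝ)) := by
    apply monotoneOn_of_deriv_nonneg (convex_Ici 0)
    · intro t ht
      exact (hgd t ht).continuousAt.continuousWithinAt
    · intro t ht
      rw [interior_Ici] at ht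
      exact (hgd t (le_of_lt ht)).differentiableAt.differentiableWithinAt
    · intro t ht
      rw [interior_Ici] at ht
      rw [(hgd t ht.le).deriv]
      exact hgderiv_nonneg t ht.le
  have hkey : ∀ t : ℝ, 0 ≤ t → (S t)⁻¹ ≤ α / 3 * t + (S 0)⁻¹ := by
    intro t ht
    have := hmono (Set.self_mem_Ici) (Set.mem_Ici.mpr ht) ht
    simp only [hgdef] at this
    simp at this
    linarith
  have hS0 : 0 < S 0 := hSpos 0 le_rfl
  have hfirst : ∀ t : ℝ, 0 ≤ t →
      1 / (α / 3 * t + 1 / S 0) ≤ S t := by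
    intro t ht
    have hB : 0 < α / 3 * t + 1 / S 0 := by
      have : 0 < 1 / S 0 := by positivity
      have : 0 ≤ α / 3 * t := by positivity
      linarith [one_div_pos.mpr hS0]
    have hSt := hSpos t ht
    have h := hkey t ht
    rw [one_div, inv_le_iff_one_le_mul₀ hB]
    calc (1:ℝ) = S t * (S t)⁻¹ := by rw [mul_inv_cancel₀ hSt.ne']
    _ ≤ S t * (α / 3 * t + 1 / S 0) := by
        apply mul_le_mul_of_nonneg_left _ hSt.le
        simpa [one_div] using hkey t ht
  constructor
  · exact hfirst
  · intro t ht
    have h := hfirst t ht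
    have hB : 0 < α / 3 * t + 1 / S 0 := by
      have h1 : 0 < 1 / S 0 := by positivity
      have h2 : 0 ≤ α / 3 * t := by positivity
      linarith
    have hmax : S t ≤ 3 * max (max (y1 t) (y2 t)) (y3 t) := by
      have a1 : y1 t ≤ max (max (y1 t) (y2 t)) (y3 t) :=
        le_trans (le_max_left _ _) (le_max_left _ _)
      have a2 : y2 t ≤ max (max (y1 t) (y2 t)) (y3 t) :=
        le_trans (le_max_right _ _) (le_max_left _ _)
      have a3 : y3 t ≤ max (max (y1 t) (y2 t)) (y3 t) := le_max_right _ _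
      simp only [hSdef]; linarith
    have heq : α * t + 3 / S 0 = 3 * (α / 3 * t + 1 / S 0) := by ring
    rw [heq]
    rw [div_le_iff₀ (by positivity)]
    rw [one_div, inv_le_iff_one_le_mul₀ hB] at h
    nlinarith [mul_le_mul_of_nonneg_right hmax hB.le]
end

section
/- Let y1, y2, y3, y4 : [0,∞) → ℝ be a solution of the system dy1/dt = -α1 y1 y2, dy2/dt = -α2 y2 y3, dy3/dt = -α3 y3 y1, dy4/dt = α1 y1 y2 + α2 y2 y3 + α3 y3 y1 with αi > 0, yi(0) > 0, and suppose 0 < yi(t) < 1 for all t and each yi(t) converges to a limit Li as t → ∞. Then L1 = L2 = L3 = 0. -/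
open Filter

lemma key_cycle (c d : ℝ) (hc : 0 < c) (hd : 0 < d) (p q r : ℝ → ℝ) (Lp Lq Lr : ℝ)
    (hq : ∀ t : ℝ, 0 ≤ t → HasDerivAt q (-c * q t * p t) t)
    (hr : ∀ t : ℝ, 0 ≤ t → HasDerivAt r (-d * r t * q t) t)
    (hqpos : ∀ t : ℝ, 0 ≤ t → 0 < q t)
    (hrpos : ∀ t : ℝ, 0 ≤ t → 0 < r t)
    (hp : Tendsto p atTop (nhds Lp)) (hLp : 0 < Lp)
    (hqL : Tendsto q atTop (nhds Lq)) (hrL : Tendsto r atTop (nhds Lr)) :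
    Lq = 0 ∧ 0 < Lr := by
  have hplarge : ∀ᶠ t in atTop, Lp / 2 < p t :=
    hp.eventually (lt_mem_nhds (by linarith))
  obtain ⟨T0, hT0⟩ := eventually_atTop.1 hplarge
  set T : ℝ := max T0 0 with hTdef
  have hTnn : (0 : ℝ) ≤ T := le_max_right _ _
  have hTp : ∀ t : ℝ, T ≤ t → Lp / 2 < p t := fun t ht =>
    hT0 t (le_trans (le_max_left _ _) ht)
  set ε : ℝ := c * Lp / 2 with hεdef
  have hεpos : 0 < ε := by positivity
  set k : ℝ := d / ε with hkdef
  have hkpos : 0 < k := by positivity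
  have hkε : k * ε = d := div_mul_cancel₀ d (ne_of_gt hεpos)
  -- monotone function h = log r - k q on [T, ∞)
  set h : ℝ → ℝ := fun t => Real.log (r t) - k * q t with hhdef
  have Hder : ∀ t : ℝ, 0 ≤ t →
      HasDerivAt h ((-d * r t * q t) / r t - k * (-c * q t * p t)) t := by
    intro t ht
    exact ((hr t ht).log (ne_of_gt (hrpos t ht))).sub ((hq t ht).const_mul k)
  have Dval : ∀ t : ℝ, 0 ≤ t →
      (-d * r t * q t) / r t - k * (-c * q t * p t) = -d * q t + k * (c * q t * p t) := by
    intro t ht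
    have hrne : r t ≠ 0 := ne_of_gt (hrpos t ht)
    field_simp
    ring
  have Dnonneg : ∀ t : ℝ, T ≤ t →
      0 ≤ (-d * r t * q t) / r t - k * (-c * q t * p t) := by
    intro t ht
    have ht0 : (0 : ℝ) ≤ t := le_trans hTnn ht
    have hqp := hqpos t ht0
    have hpl := hTp t ht
    rw [Dval t ht0]
    have h1 : 0 ≤ (k * q t) * (c * p t - ε) := by
      apply mul_nonneg (mul_pos hkpos hqp).le
      nlinarith
    nlinarith [hkε]
  have mono : MonotoneOn h (Set.Ici T) := by
    apply monotoneOn_of_deriv_nonneg (convex_Ici T)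
    · intro t ht
      exact (Hder t (le_trans hTnn ht)).continuousAt.continuousWithinAt
    · rw [interior_Ici]
      intro t ht
      exact (Hder t (le_trans hTnn (le_of_lt ht))).differentiableAt.differentiableWithinAt
    · rw [interior_Ici]
      intro t ht
      rw [(Hder t (le_trans hTnn (le_of_lt ht))).deriv]
      exact Dnonneg t (le_of_lt ht)
  have rbound : ∀ t : ℝ, T ≤ t → Real.exp (h T) ≤ r t := by
    intro t ht
    have hmono := mono (Set.self_mem_Ici) (Set.mem_Ici.2 ht) ht
    have ht0 : (0 : ℝ) ≤ t := le_trans hTnn ht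
    have hlog : h T ≤ Real.log (r t) := by
      have : 0 ≤ k * q t := (mul_pos hkpos (hqpos t ht0)).le
      simp only [hhdef] at hmono ⊢
      linarith
    calc Real.exp (h T) ≤ Real.exp (Real.log (r t)) := Real.exp_le_exp.2 hlog
      _ = r t := Real.exp_log (hrpos t ht0)
  have hLrpos : 0 < Lr := by
    have : Real.exp (h T) ≤ Lr :=
      ge_of_tendsto hrL (eventually_atTop.2 ⟨T, rbound⟩)
    exact lt_of_lt_of_le (Real.exp_pos _) this
  refine ⟨?_, hLrpos⟩
  have hLqnn : 0 ≤ Lq :=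
    ge_of_tendsto hqL (eventually_atTop.2 ⟨0, fun t ht => (hqpos t ht).le⟩)
  by_contra hne
  have hLqpos : 0 < Lq := lt_of_le_of_ne hLqnn (Ne.symm hne)
  have hqlarge : ∀ᶠ t in atTop, Lq / 2 < q t :=
    hqL.eventually (lt_mem_nhds (by linarith))
  obtain ⟨T1', hT1'⟩ := eventually_atTop.1 hqlarge
  set T1 : ℝ := max (max T1' T0) 0 with hT1def
  have hT1nn : (0 : ℝ) ≤ T1 := le_max_right _ _
  have hT1q : ∀ t : ℝ, T1 ≤ t → Lq / 2 < q t := fun t ht =>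
    hT1' t (le_trans (le_trans (le_max_left _ _) (le_max_left _ _)) ht)
  have hT1p : ∀ t : ℝ, T1 ≤ t → Lp / 2 < p t := fun t ht =>
    hT0 t (le_trans (le_trans (le_max_right _ _) (le_max_left _ _)) ht)
  set kk : ℝ := c * (Lq / 2) * (Lp / 2) with hkkdef
  have hkkpos : 0 < kk := by positivity
  set g : ℝ → ℝ := fun t => q t + kk * t with hgdef
  have Hder2 : ∀ t : ℝ, 0 ≤ t → HasDerivAt g (-c * q t * p t + kk) t := by
    intro t ht
    have : HasDerivAt (fun s : ℝ => kk * s) kk t := by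
      simpa using (hasDerivAt_id t).const_mul kk
    exact (hq t ht).add this
  have anti : AntitoneOn g (Set.Ici T1) := by
    apply antitoneOn_of_deriv_nonpos (convex_Ici T1)
    · intro t ht
      exact (Hder2 t (le_trans hT1nn ht)).continuousAt.continuousWithinAt
    · rw [interior_Ici]
      intro t ht
      exact (Hder2 t (le_trans hT1nn (le_of_lt ht))).differentiableAt.differentiableWithinAt
    · rw [interior_Ici]
      intro t ht
      rw [(Hder2 t (le_trans hT1nn (le_of_lt ht))).deriv]
      have hq1 := hT1q t (le_of_lt ht)
      have hp1 := hT1p t (le_of_lt ht)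
      have A : 0 < q t - Lq / 2 := by linarith
      have B : 0 < p t - Lp / 2 := by linarith
      nlinarith [mul_pos hc (mul_pos A B),
        mul_pos hc (mul_pos (show (0:ℝ) < Lq / 2 by linarith) B),
        mul_pos hc (mul_pos (show (0:ℝ) < Lp / 2 by linarith) A)]
  set C : ℝ := q T1 + kk * T1 with hCdef
  set t0 : ℝ := max T1 (C / kk) with ht0def
  have ht0T1 : T1 ≤ t0 := le_max_left _ _
  have hanti := anti (Set.self_mem_Ici) (Set.mem_Ici.2 ht0T1) ht0T1
  have hqt0 : q t0 ≤ C - kk * t0 := by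
    simp only [hgdef, hCdef] at hanti ⊢
    linarith
  have hkkt0 : C ≤ kk * t0 := by
    have : C / kk ≤ t0 := le_max_right _ _
    calc C = kk * (C / kk) := by field_simp
      _ ≤ kk * t0 := by nlinarith
  have hqt0pos : 0 < q t0 := hqpos t0 (le_trans hT1nn ht0T1)
  linarith

theorem three_cycle_limits_zero (α1 α2 α3 : ℝ) (hα1 : 0 < α1) (hα2 : 0 < α2) (hα3 : 0 < α3)
    (y1 y2 y3 y4 : ℝ → ℝ) (L1 L2 L3 L4 : ℝ)
    (h1 : ∀ t : ℝ, 0 ≤ t → HasDerivAt y1 (-α1 * y1 t * y2 t) t)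
    (h2 : ∀ t : ℝ, 0 ≤ t → HasDerivAt y2 (-α2 * y2 t * y3 t) t)
    (h3 : ∀ t : ℝ, 0 ≤ t → HasDerivAt y3 (-α3 * y3 t * y1 t) t)
    (h4 : ∀ t : ℝ, 0 ≤ t →
      HasDerivAt y4 (α1 * y1 t * y2 t + α2 * y2 t * y3 t + α3 * y3 t * y1 t) t)
    (h10 : 0 < y1 0) (h20 : 0 < y2 0) (h30 : 0 < y3 0) (h40 : 0 < y4 0)
    (hb1 : ∀ t : ℝ, 0 ≤ t → 0 < y1 t ∧ y1 t < 1)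
    (hb2 : ∀ t : ℝ, 0 ≤ t → 0 < y2 t ∧ y2 t < 1)
    (hb3 : ∀ t : ℝ, 0 ≤ t → 0 < y3 t ∧ y3 t < 1)
    (hb4 : ∀ t : ℝ, 0 ≤ t → 0 < y4 t ∧ y4 t < 1)
    (hL1 : Tendsto y1 atTop (nhds L1))
    (hL2 : Tendsto y2 atTop (nhds L2))
    (hL3 : Tendsto y3 atTop (nhds L3))
    (hL4 : Tendsto y4 atTop (nhds L4)) :
    L1 = 0 ∧ L2 = 0 ∧ L3 = 0 := by
  have p1 : ∀ t : ℝ, 0 ≤ t → 0 < y1 t := fun t ht => (hb1 t ht).1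
  have p2 : ∀ t : ℝ, 0 ≤ t → 0 < y2 t := fun t ht => (hb2 t ht).1
  have p3 : ∀ t : ℝ, 0 ≤ t → 0 < y3 t := fun t ht => (hb3 t ht).1
  -- if L1 > 0 then L3 = 0 and L2 > 0
  have k1 : 0 < L1 → L3 = 0 ∧ 0 < L2 := fun hpos =>
    key_cycle α3 α2 hα3 hα2 y1 y3 y2 L1 L3 L2 h3 h2 p3 p2 hL1 hpos hL3 hL2
  -- if L2 > 0 then L1 = 0 and L3 > 0
  have k2 : 0 < L2 → L1 = 0 ∧ 0 < L3 := fun hpos =>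
    key_cycle α1 α3 hα1 hα3 y2 y1 y3 L2 L1 L3 h1 h3 p1 p3 hL2 hpos hL1 hL3
  -- if L3 > 0 then L2 = 0 and L1 > 0
  have k3 : 0 < L3 → L2 = 0 ∧ 0 < L1 := fun hpos =>
    key_cycle α2 α1 hα2 hα1 y3 y2 y1 L3 L2 L1 h2 h1 p2 p1 hL3 hpos hL2 hL1
  have n1 : (0 : ℝ) ≤ L1 :=
    ge_of_tendsto hL1 (eventually_atTop.2 ⟨0, fun t ht => (p1 t ht).le⟩)
  have n2 : (0 : ℝ) ≤ L2 :=
    ge_of_tendsto hL2 (eventually_atTop.2 ⟨0, fun t ht => (p2 t ht).le⟩)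
  have n3 : (0 : ℝ) ≤ L3 :=
    ge_of_tendsto hL3 (eventually_atTop.2 ⟨0, fun t ht => (p3 t ht).le⟩)
  have z1 : L1 = 0 := by
    by_contra hne
    have hpos : 0 < L1 := lt_of_le_of_ne n1 (Ne.symm hne)
    have := (k2 (k1 hpos).2).1
    exact hne this
  have z2 : L2 = 0 := by
    by_contra hne
    have hpos : 0 < L2 := lt_of_le_of_ne n2 (Ne.symm hne)
    have := (k3 (k2 hpos).2).1
    exact hne this
  have z3 : L3 = 0 := by
    by_contra hne
    have hpos : 0 < L3 := lt_of_le_of_ne n3 (Ne.symm hne)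
    have := (k1 (k3 hpos).2).1
    exact hne this
  exact ⟨z1, z2, z3⟩
end
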